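/- Let λ > 0, T > 0, let f : [0,T] → ℝ be three times continuously differentiable, and define I(t) := ∫₀ᵗ sin(√λ (t − s)) f(s) ds. Then I is twice differentiable on [0,T] and I''(t) = √λ f(0) cos(√λ t) + f'(0) sin(√λ t) − λ^{−1/2} f''(0) cos(√λ t) + λ^{−1/2} f''(t) − λ^{−1/2} ∫₀ᵗ cos(√λ (t − s)) f'''(s) ds for all t ∈ [0,T]. -/

import Mathlib

open Set intervalIntegral

lemma ftcIcc {T : ℝ} {g : ℝ → ℝ} (hg : ContinuousOn g (Set.Icc 0 T)) {t : ℝ}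
    (ht : t ∈ Set.Icc (0:ℝ) T) :
    HasDerivWithinAt (fun u => ∫ s in (0:ℝ)..u, g s) (g t) (Set.Icc 0 T) t := by
  haveI : Fact (t ∈ Set.Icc (0:ℝ) T) := ⟨ht⟩
  have hsub : Set.uIcc (0:ℝ) t ⊆ Set.Icc 0 T := by
    rw [Set.uIcc_of_le ht.1]
    exact Set.Icc_subset_Icc le_rfl ht.2
  exact intervalIntegral.integral_hasDerivWithinAt_right
    ((hg.mono hsub).intervalIntegrable)
    (hg.stronglyMeasurableAtFilter_nhdsWithin measurableSet_Icc t)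
    (hg t ht)

lemma ibp_sin {c T : ℝ} (hc : 0 < c) {g g' : ℝ → ℝ}
    (hg : ∀ x ∈ Set.Icc (0:ℝ) T, HasDerivWithinAt g (g' x) (Set.Icc 0 T) x)
    (hg'c : ContinuousOn g' (Set.Icc 0 T))
    {t : ℝ} (ht : t ∈ Set.Icc (0:ℝ) T) :
    c * ∫ s in (0:ℝ)..t, Real.sin (c*(t-s)) * g s
      = g t - Real.cos (c*t) * g 0 - ∫ s in (0:ℝ)..t, Real.cos (c*(t-s)) * g' s := by
  have hc0 : c ≠ 0 := hc.ne'
  have hgc : ContinuousOn g (Set.Icc 0 T) := fun x hx => (hg x hx).continuousWithinAt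
  have h0t : Set.Icc (0:ℝ) t ⊆ Set.Icc 0 T := Set.Icc_subset_Icc le_rfl ht.2
  have huIcc : Set.uIcc (0:ℝ) t = Set.Icc 0 t := Set.uIcc_of_le ht.1
  have hlin : Continuous fun s : ℝ => c*(t-s) := continuous_const.mul (continuous_const.sub continuous_id)
  have hkercont : Continuous fun s => Real.cos (c*(t-s)) := Real.continuous_cos.comp hlin
  have hkercont2 : Continuous fun s => Real.sin (c*(t-s)) := Real.continuous_sin.comp hlin
  have hker : ∀ s : ℝ, HasDerivAt (fun s => Real.cos (c*(t-s)) / c) (Real.sin (c*(t-s))) s := by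
    intro s
    have h1 : HasDerivAt (fun s : ℝ => c*(t-s)) (-c) s := by
      simpa using ((hasDerivAt_id s).const_sub t).const_mul c
    have h2 := h1.cos.div_const c
    refine h2.congr_deriv ?_
    field_simp
  have hFderiv : ∀ x ∈ Set.Ioo (0:ℝ) t, HasDerivWithinAt
      (fun s => Real.cos (c*(t-s)) / c * g s)
      (Real.sin (c*(t-x)) * g x + (1/c) * (Real.cos (c*(t-x)) * g' x)) (Set.Ioi x) x := by
    intro x hx
    have hx' : x ∈ Set.Icc (0:ℝ) T := ⟨hx.1.le, hx.2.le.trans ht.2⟩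
    have hmem : Set.Icc (0:ℝ) T ∈ nhds x := Icc_mem_nhds hx.1 (lt_of_lt_of_le hx.2 ht.2)
    have hgx : HasDerivAt g (g' x) x := (hg x hx').hasDerivAt hmem
    have := ((hker x).mul hgx).hasDerivWithinAt (s := Set.Ioi x)
    refine this.congr_deriv ?_
    ring
  have hcont : ContinuousOn (fun s => Real.cos (c*(t-s)) / c * g s) (Set.Icc 0 t) :=
    ((hkercont.div_const c).continuousOn).mul (hgc.mono h0t)
  have hint1 : IntervalIntegrable (fun s => Real.sin (c*(t-s)) * g s) MeasureTheory.volume 0 t := by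
    apply ContinuousOn.intervalIntegrable
    rw [huIcc]
    exact (hkercont2.continuousOn).mul (hgc.mono h0t)
  have hint2 : IntervalIntegrable (fun s => Real.cos (c*(t-s)) * g' s) MeasureTheory.volume 0 t := by
    apply ContinuousOn.intervalIntegrable
    rw [huIcc]
    exact (hkercont.continuousOn).mul (hg'c.mono h0t)
  have hint2' : IntervalIntegrable (fun s => (1/c) * (Real.cos (c*(t-s)) * g' s))
      MeasureTheory.volume 0 t := hint2.const_mul _
  have hFTC := intervalIntegral.integral_eq_sub_of_hasDeriv_right_of_le ht.1 hcont hFderiv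
    (hint1.add hint2')
  rw [intervalIntegral.integral_add hint1 hint2', intervalIntegral.integral_const_mul] at hFTC
  have e1 : c*(t-t) = 0 := by ring
  have e2 : c*(t-0) = c*t := by ring
  rw [e1, e2, Real.cos_zero] at hFTC
  field_simp at hFTC ⊢
  linarith [hFTC]

lemma ibp_cos {c T : ℝ} (hc : 0 < c) {g g' : ℝ → ℝ}
    (hg : ∀ x ∈ Set.Icc (0:ℝ) T, HasDerivWithinAt g (g' x) (Set.Icc 0 T) x)
    (hg'c : ContinuousOn g' (Set.Icc 0 T))
    {t : ℝ} (ht : t ∈ Set.Icc (0:ℝ) T) :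
    c * ∫ s in (0:ℝ)..t, Real.cos (c*(t-s)) * g s
      = Real.sin (c*t) * g 0 + ∫ s in (0:ℝ)..t, Real.sin (c*(t-s)) * g' s := by
  have hc0 : c ≠ 0 := hc.ne'
  have hgc : ContinuousOn g (Set.Icc 0 T) := fun x hx => (hg x hx).continuousWithinAt
  have h0t : Set.Icc (0:ℝ) t ⊆ Set.Icc 0 T := Set.Icc_subset_Icc le_rfl ht.2
  have huIcc : Set.uIcc (0:ℝ) t = Set.Icc 0 t := Set.uIcc_of_le ht.1
  have hlin : Continuous fun s : ℝ => c*(t-s) := continuous_const.mul (continuous_const.sub continuous_id)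
  have hkercont : Continuous fun s => Real.cos (c*(t-s)) := Real.continuous_cos.comp hlin
  have hkercont2 : Continuous fun s => Real.sin (c*(t-s)) := Real.continuous_sin.comp hlin
  have hker : ∀ s : ℝ, HasDerivAt (fun s => -(Real.sin (c*(t-s))) / c) (Real.cos (c*(t-s))) s := by
    intro s
    have h1 : HasDerivAt (fun s : ℝ => c*(t-s)) (-c) s := by
      simpa using ((hasDerivAt_id s).const_sub t).const_mul c
    have h2 := h1.sin.neg.div_const c
    refine h2.congr_deriv ?_
    field_simp
  have hFderiv : ∀ x ∈ Set.Ioo (0:ℝ) t, HasDerivWithinAt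
      (fun s => -(Real.sin (c*(t-s))) / c * g s)
      (Real.cos (c*(t-x)) * g x + (1/c) * (-(Real.sin (c*(t-x))) * g' x)) (Set.Ioi x) x := by
    intro x hx
    have hx' : x ∈ Set.Icc (0:ℝ) T := ⟨hx.1.le, hx.2.le.trans ht.2⟩
    have hmem : Set.Icc (0:ℝ) T ∈ nhds x := Icc_mem_nhds hx.1 (lt_of_lt_of_le hx.2 ht.2)
    have hgx : HasDerivAt g (g' x) x := (hg x hx').hasDerivAt hmem
    have := ((hker x).mul hgx).hasDerivWithinAt (s := Set.Ioi x)
    refine this.congr_deriv ?_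
    ring
  have hcont : ContinuousOn (fun s => -(Real.sin (c*(t-s))) / c * g s) (Set.Icc 0 t) :=
    ((hkercont2.neg.div_const c).continuousOn).mul (hgc.mono h0t)
  have hint1 : IntervalIntegrable (fun s => Real.cos (c*(t-s)) * g s) MeasureTheory.volume 0 t := by
    apply ContinuousOn.intervalIntegrable
    rw [huIcc]
    exact (hkercont.continuousOn).mul (hgc.mono h0t)
  have hint2 : IntervalIntegrable (fun s => -(Real.sin (c*(t-s))) * g' s)
      MeasureTheory.volume 0 t := by
    apply ContinuousOn.intervalIntegrable
    rw [huIcc]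
    exact (hkercont2.neg.continuousOn).mul (hg'c.mono h0t)
  have hint2' : IntervalIntegrable (fun s => (1/c) * (-(Real.sin (c*(t-s))) * g' s))
      MeasureTheory.volume 0 t := hint2.const_mul _
  have hFTC := intervalIntegral.integral_eq_sub_of_hasDeriv_right_of_le ht.1 hcont hFderiv
    (hint1.add hint2')
  rw [intervalIntegral.integral_add hint1 hint2', intervalIntegral.integral_const_mul] at hFTC
  have e1 : c*(t-t) = 0 := by ring
  have e2 : c*(t-0) = c*t := by ring
  rw [e1, e2, Real.sin_zero] at hFTC
  have hneg : ∫ s in (0:ℝ)..t, -(Real.sin (c*(t-s))) * g' s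
      = - ∫ s in (0:ℝ)..t, Real.sin (c*(t-s)) * g' s := by
    rw [← intervalIntegral.integral_neg]
    congr 1; funext s; ring
  rw [hneg] at hFTC
  field_simp at hFTC ⊢
  linarith [hFTC]


/-- Second derivative of the Duhamel integral after three integrations by parts. -/
theorem duhamel_second_derivative_three_ibp (lam T : ℝ) (hlam : 0 < lam) (hT : 0 < T)
    (f f' f'' f''' : ℝ → ℝ)
    (hf' : ∀ t ∈ Set.Icc (0 : ℝ) T, HasDerivWithinAt f (f' t) (Set.Icc (0 : ℝ) T) t)
    (hf'' : ∀ t ∈ Set.Icc (0 : ℝ) T, HasDerivWithinAt f' (f'' t) (Set.Icc (0 : ℝ) T) t)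
    (hf''' : ∀ t ∈ Set.Icc (0 : ℝ) T, HasDerivWithinAt f'' (f''' t) (Set.Icc (0 : ℝ) T) t)
    (hf'''c : ContinuousOn f''' (Set.Icc (0 : ℝ) T)) :
    ∃ I' : ℝ → ℝ,
      (∀ t ∈ Set.Icc (0 : ℝ) T,
        HasDerivWithinAt
          (fun t => ∫ s in (0 : ℝ)..t, Real.sin (Real.sqrt lam * (t - s)) * f s)
          (I' t) (Set.Icc (0 : ℝ) T) t) ∧
      (∀ t ∈ Set.Icc (0 : ℝ) T,
        HasDerivWithinAt I'
          (Real.sqrt lam * f 0 * Real.cos (Real.sqrt lam * t)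
            + f' 0 * Real.sin (Real.sqrt lam * t)
            - (Real.sqrt lam)⁻¹ * f'' 0 * Real.cos (Real.sqrt lam * t)
            + (Real.sqrt lam)⁻¹ * f'' t
            - (Real.sqrt lam)⁻¹ *
                ∫ s in (0 : ℝ)..t, Real.cos (Real.sqrt lam * (t - s)) * f''' s)
          (Set.Icc (0 : ℝ) T) t) := by
  set c := Real.sqrt lam with hcdef
  have hc : 0 < c := Real.sqrt_pos.2 hlam
  have hc0 : c ≠ 0 := hc.ne'
  have hfc : ContinuousOn f (Set.Icc 0 T) := fun x hx => (hf' x hx).continuousWithinAt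
  have hf'c : ContinuousOn f' (Set.Icc 0 T) := fun x hx => (hf'' x hx).continuousWithinAt
  have hf''c : ContinuousOn f'' (Set.Icc 0 T) := fun x hx => (hf''' x hx).continuousWithinAt
  have hcosc : Continuous fun s : ℝ => Real.cos (c*s) :=
    Real.continuous_cos.comp (continuous_const.mul continuous_id)
  have hsinc : Continuous fun s : ℝ => Real.sin (c*s) :=
    Real.continuous_sin.comp (continuous_const.mul continuous_id)
  -- splitting of the kernel
  have keysin : ∀ u ∈ Set.Icc (0:ℝ) T,
      (∫ s in (0:ℝ)..u, Real.sin (c*(u-s)) * f s)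
        = Real.sin (c*u) * (∫ s in (0:ℝ)..u, Real.cos (c*s) * f s)
          - Real.cos (c*u) * (∫ s in (0:ℝ)..u, Real.sin (c*s) * f s) := by
    intro u hu
    have hsub : Set.uIcc (0:ℝ) u ⊆ Set.Icc 0 T := by
      rw [Set.uIcc_of_le hu.1]; exact Set.Icc_subset_Icc le_rfl hu.2
    have hi1 : IntervalIntegrable (fun s => Real.cos (c*s) * f s) MeasureTheory.volume 0 u :=
      ((hcosc.continuousOn).mul (hfc.mono hsub)).intervalIntegrable
    have hi2 : IntervalIntegrable (fun s => Real.sin (c*s) * f s) MeasureTheory.volume 0 u :=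
      ((hsinc.continuousOn).mul (hfc.mono hsub)).intervalIntegrable
    have hpt : ∀ s : ℝ, Real.sin (c*(u-s)) * f s
        = Real.sin (c*u) * (Real.cos (c*s) * f s) - Real.cos (c*u) * (Real.sin (c*s) * f s) := by
      intro s
      have : c*(u-s) = c*u - c*s := by ring
      rw [this, Real.sin_sub]; ring
    simp_rw [hpt]
    rw [intervalIntegral.integral_sub (hi1.const_mul _) (hi2.const_mul _),
      intervalIntegral.integral_const_mul, intervalIntegral.integral_const_mul]
  -- FTC-1 derivatives of C and S
  have hCd : ∀ t ∈ Set.Icc (0:ℝ) T,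
      HasDerivWithinAt (fun u => ∫ s in (0:ℝ)..u, Real.cos (c*s) * f s)
        (Real.cos (c*t) * f t) (Set.Icc 0 T) t := fun t ht =>
    ftcIcc ((hcosc.continuousOn).mul hfc) ht
  have hSd : ∀ t ∈ Set.Icc (0:ℝ) T,
      HasDerivWithinAt (fun u => ∫ s in (0:ℝ)..u, Real.sin (c*s) * f s)
        (Real.sin (c*t) * f t) (Set.Icc 0 T) t := fun t ht =>
    ftcIcc ((hsinc.continuousOn).mul hfc) ht
  have hsind : ∀ t : ℝ, HasDerivAt (fun u => Real.sin (c*u)) (Real.cos (c*t) * (c*1)) t :=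
    fun t => ((hasDerivAt_id t).const_mul c).sin
  have hcosd : ∀ t : ℝ, HasDerivAt (fun u => Real.cos (c*u)) (-Real.sin (c*t) * (c*1)) t :=
    fun t => ((hasDerivAt_id t).const_mul c).cos
  refine ⟨fun u => c * (Real.cos (c*u) * (∫ s in (0:ℝ)..u, Real.cos (c*s) * f s)
      + Real.sin (c*u) * (∫ s in (0:ℝ)..u, Real.sin (c*s) * f s)), ?_, ?_⟩
  · intro t ht
    have h1 : HasDerivWithinAt
        (fun u => Real.sin (c*u) * (∫ s in (0:ℝ)..u, Real.cos (c*s) * f s)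
          - Real.cos (c*u) * (∫ s in (0:ℝ)..u, Real.sin (c*s) * f s))
        (Real.cos (c*t) * (c*1) * (∫ s in (0:ℝ)..t, Real.cos (c*s) * f s)
            + Real.sin (c*t) * (Real.cos (c*t) * f t)
          - (-Real.sin (c*t) * (c*1) * (∫ s in (0:ℝ)..t, Real.sin (c*s) * f s)
            + Real.cos (c*t) * (Real.sin (c*t) * f t))) (Set.Icc 0 T) t :=
      (((hsind t).hasDerivWithinAt.mul (hCd t ht)).sub
        (((hcosd t).hasDerivWithinAt).mul (hSd t ht)))
    have h2 := h1.congr (fun y hy => keysin y hy) (keysin t ht)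
    refine h2.congr_deriv ?_
    ring
  · intro t ht
    have h3 : HasDerivWithinAt
        (fun u => Real.cos (c*u) * (∫ s in (0:ℝ)..u, Real.cos (c*s) * f s)
          + Real.sin (c*u) * (∫ s in (0:ℝ)..u, Real.sin (c*s) * f s))
        (-Real.sin (c*t) * (c*1) * (∫ s in (0:ℝ)..t, Real.cos (c*s) * f s)
            + Real.cos (c*t) * (Real.cos (c*t) * f t)
          + (Real.cos (c*t) * (c*1) * (∫ s in (0:ℝ)..t, Real.sin (c*s) * f s)
            + Real.sin (c*t) * (Real.sin (c*t) * f t))) (Set.Icc 0 T) t :=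
      (((hcosd t).hasDerivWithinAt.mul (hCd t ht)).add
        (((hsind t).hasDerivWithinAt).mul (hSd t ht)))
    have h4 := h3.const_mul c
    refine h4.congr_deriv ?_
    -- now a pure identity
    have e0 := keysin t ht
    have e1 := ibp_sin hc hf' hf'c ht
    have e2 := ibp_cos hc hf'' hf''c ht
    have e3 := ibp_sin hc hf''' hf'''c ht
    have pyth := Real.sin_sq_add_cos_sq (c*t)
    have hl : lam = c * c := (Real.mul_self_sqrt hlam.le).symm
    rw [e0] at e1
    field_simp
    linear_combination (-1)*(c^2*e1 - c*e2 - e3 - c^2*(f t)*pyth)
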